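/- Fix a real number γ and an integer ℓ ≥ 1. Let r₁,…,r_ℓ and s₁,…,s_ℓ be points in ℝ² and let y₁,…,y_ℓ, w₁,…,w_ℓ be real numbers satisfying: (i) y_k + w_k ≤ γ·D(r_k, s_k) for every 1 ≤ k ≤ ℓ; (ii) w_k + y_{k+1} = D(s_k, r_{k+1}) for every 1 ≤ k ≤ ℓ−1; (iii) y₁ = 0 and w_ℓ = 0. Then the total length of the forward edges is at least a 1/(γ+1) fraction of the total length of the path: (γ+1) · Σ_{k=1}^{ℓ} D(r_k, s_k) ≥ Σ_{k=1}^{ℓ} D(r_k, s_k) + Σ_{k=1}^{ℓ−1} D(s_k, r_{k+1}). -/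

import Mathlib

open Finset

/-- ℓ1 distance in the time-augmented (TA) plane. -/
def taDist (p q : ℝ × ℝ) : ℝ := |p.1 - q.1| + |p.2 - q.2|

/-- Lemma B.2 (OPTLB1): under the dual invariants, the total length of the
forward edges of an alternating path is at least a `1/(γ+1)` fraction of the
total length of the path. -/
theorem forward_edges_fraction (γ : ℝ) (ℓ : ℕ) (hℓ : 1 ≤ ℓ)
    (r s : ℕ → ℝ × ℝ) (y w : ℕ → ℝ)
    (h1 : ∀ k < ℓ, y k + w k ≤ γ * taDist (r k) (s k))
    (h2 : ∀ k, k + 1 < ℓ → w k + y (k + 1) = taDist (s k) (r (k + 1)))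
    (h3 : y 0 = 0) (h4 : w (ℓ - 1) = 0) :
    ∑ k ∈ range ℓ, taDist (r k) (s k)
        + ∑ k ∈ range (ℓ - 1), taDist (s k) (r (k + 1))
      ≤ (γ + 1) * ∑ k ∈ range ℓ, taDist (r k) (s k) := by
  obtain ⟨n, rfl⟩ : ∃ n, ℓ = n + 1 := ⟨ℓ - 1, by omega⟩
  simp only [Nat.add_sub_cancel] at h4 ⊢
  have hB : ∑ k ∈ range n, taDist (s k) (r (k + 1))
      = ∑ k ∈ range (n + 1), (y k + w k) := by
    rw [sum_add_distrib, Finset.sum_range_succ', Finset.sum_range_succ, h3, h4]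
    rw [add_zero, add_zero, ← sum_add_distrib]
    refine (Finset.sum_congr rfl fun k hk => ?_).symm.trans (by ring)
    exact (add_comm (y (k+1)) (w k)).trans (h2 k (by simpa using hk))
  have hle : ∑ k ∈ range (n + 1), (y k + w k)
      ≤ ∑ k ∈ range (n + 1), γ * taDist (r k) (s k) := by
    exact Finset.sum_le_sum fun k hk => h1 k (by simpa using hk)
  rw [← Finset.mul_sum] at hle
  nlinarith [hB, hle]
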